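/- Let ν ∈ ℂ with Re ν > 0 and let x ∈ ℝ with x > 0. Then x^(2ν−1) · ∫₀^1 e^(−x²·(2−t)) · t^(ν−1) · (1−t)^(−1/2) dt = ∫₀^(2x) e^(−u²/2 − (2x−u)²/2) · u^(ν−1) · (2x−u)^(ν−1) du. (This is the convolution identity (37)–(38): (Γ(ν)Γ(1/2)/Γ(ν+1/2)) · x^(2ν−1) · e^(−2x²) · Φ(ν, ν+1/2; x²) = (f∗f)(2x) where f(t) = t^(ν−1) e^(−t²/2) and ∗ is the Laplace convolution, written with Φ replaced by its Euler integral.) -/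

import Mathlib

open MeasureTheory Complex Set

/-- Convolution identity (37)-(38): `x^(2ν-1) ∫₀^1 e^(-x²(2-t)) t^(ν-1) (1-t)^(-1/2) dt
= ∫₀^(2x) e^(-u²/2-(2x-u)²/2) u^(ν-1) (2x-u)^(ν-1) du`, i.e.
`(Γ(ν)Γ(1/2)/Γ(ν+1/2)) x^(2ν-1) e^(-2x²) Φ(ν, ν+1/2; x²) = (f∗f)(2x)` with
`f(t) = t^(ν-1) e^(-t²/2)`, Φ written via its Euler integral. -/
theorem phi_as_laplace_convolution
    (ν : ℂ) (hν : 0 < ν.re) (x : ℝ) (hx : 0 < x) :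
    (x:ℂ) ^ (2 * ν - 1) *
      (∫ t in Ioo (0:ℝ) 1,
        Complex.exp (-(x:ℂ)^2 * (2 - (t:ℂ))) * (t:ℂ) ^ (ν - 1) *
          ((1:ℂ) - (t:ℂ)) ^ (-(1:ℂ)/2)) =
    ∫ u in Ioo (0:ℝ) (2 * x),
      Complex.exp (-(u:ℂ)^2 / 2 - ((2 * x - u : ℝ) : ℂ)^2 / 2) *
        (u:ℂ) ^ (ν - 1) * ((2 * x - u : ℝ) : ℂ) ^ (ν - 1) := by
  set g : ℝ → ℂ := fun u =>
    Complex.exp (-(u:ℂ)^2 / 2 - ((2 * x - u : ℝ) : ℂ)^2 / 2) *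
      (u:ℂ) ^ (ν - 1) * ((2 * x - u : ℝ) : ℂ) ^ (ν - 1) with hg
  have hxc : (x:ℂ) ≠ 0 := by exact_mod_cast hx.ne'
  -- symmetry
  have hsym : ∀ u : ℝ, g (2 * x - u) = g u := by
    intro u
    rw [hg]
    simp only
    rw [show ((2 * x - (2 * x - u) : ℝ) : ℂ) = (u : ℂ) by push_cast; ring,
      show -((2 * x - u : ℝ):ℂ)^2/2 - (u:ℂ)^2/2 = -(u:ℂ)^2/2 - ((2 * x - u : ℝ):ℂ)^2/2 by ring]
    ring
  -- integrability on (0, x)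
  have hInt0 : IntegrableOn g (Ioo 0 x) := by
    set a : ℝ := ν.re - 1 with ha_def
    have ha : -1 < a := by simp [ha_def]; linarith
    set C : ℝ := x ^ a + (2*x) ^ a with hC_def
    have hbound : IntegrableOn (fun u : ℝ => C * u ^ a) (Ioo 0 x) := by
      have h1 : IntervalIntegrable (fun u : ℝ => u ^ a) volume 0 x :=
        intervalIntegral.intervalIntegrable_rpow' ha
      rw [intervalIntegrable_iff, uIoc_of_le hx.le] at h1
      exact (h1.mono_set Ioo_subset_Ioc_self).const_mul C
    apply Integrable.mono' hbound
    · apply ContinuousOn.aestronglyMeasurable _ measurableSet_Ioo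
      apply ContinuousOn.mul
      apply ContinuousOn.mul
      · exact (Complex.continuous_exp.comp (by continuity)).continuousOn
      · intro u hu
        exact (continuousAt_ofReal_cpow_const u (ν-1) (Or.inr hu.1.ne')).continuousWithinAt
      · intro u hu
        have h2 : (2*x - u) ≠ 0 := by nlinarith [hu.2]
        exact ((continuousAt_ofReal_cpow_const (2*x-u) (ν-1) (Or.inr h2)).comp
          (by fun_prop)).continuousWithinAt
    · filter_upwards [ae_restrict_mem measurableSet_Ioo] with u hu
      obtain ⟨hu0, hux⟩ := hu
      have h2x : 0 < 2*x - u := by linarith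
      have hexp : ‖Complex.exp (-(u:ℂ)^2 / 2 - ((2 * x - u : ℝ) : ℂ)^2 / 2)‖ ≤ 1 := by
        rw [Complex.norm_exp, Real.exp_le_one_iff]
        have : (-(u:ℂ)^2 / 2 - ((2 * x - u : ℝ) : ℂ)^2 / 2)
            = ((-u^2/2 - (2*x-u)^2/2 : ℝ) : ℂ) := by push_cast; ring
        rw [this, Complex.ofReal_re]
        nlinarith
      have hnu : ‖(u:ℂ) ^ (ν - 1)‖ = u ^ a := by
        rw [Complex.norm_cpow_eq_rpow_re_of_pos hu0]
        simp [ha_def]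
      have hn2 : ‖((2 * x - u : ℝ) : ℂ) ^ (ν - 1)‖ = (2*x-u) ^ a := by
        rw [Complex.norm_cpow_eq_rpow_re_of_pos h2x]
        simp [ha_def]
      have hCb : (2*x-u) ^ a ≤ C := by
        rcases le_or_gt 0 a with h | h
        · calc (2*x-u) ^ a ≤ (2*x) ^ a :=
                Real.rpow_le_rpow h2x.le (by linarith) h
              _ ≤ C := by rw [hC_def]; nlinarith [Real.rpow_nonneg hx.le a]
        · calc (2*x-u) ^ a ≤ x ^ a :=
                Real.rpow_le_rpow_of_nonpos (by linarith) (by linarith) h.le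
              _ ≤ C := by
                rw [hC_def]; nlinarith [Real.rpow_nonneg (by linarith : (0:ℝ) ≤ 2*x) a]
      calc ‖g u‖ = ‖Complex.exp (-(u:ℂ)^2 / 2 - ((2 * x - u : ℝ) : ℂ)^2 / 2)‖ *
              ‖(u:ℂ) ^ (ν - 1)‖ * ‖((2 * x - u : ℝ) : ℂ) ^ (ν - 1)‖ := by
            rw [hg]; simp only [norm_mul]
        _ ≤ 1 * (u ^ a) * ((2*x-u) ^ a) := by
            rw [hnu, hn2]
            gcongr
        _ ≤ C * u ^ a := by
            rw [one_mul, mul_comm C]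
            gcongr
  -- reflection
  have hrd : ∀ u ∈ Ioo x (2*x), HasDerivWithinAt (fun u : ℝ => 2*x - u) (-1) (Ioo x (2*x)) u :=
    fun u _ => ((hasDerivAt_id u).const_sub (2*x)).hasDerivWithinAt
  have hrinj : InjOn (fun u : ℝ => 2*x - u) (Ioo x (2*x)) := by
    intro a _ b _ h
    dsimp at h; linarith
  have himg : (fun u : ℝ => 2*x - u) '' Ioo x (2*x) = Ioo 0 x := by
    rw [image_const_sub_Ioo]; congr 1 <;> ring
  have hrefl : (∫ u in Ioo (0:ℝ) x, g u) = ∫ u in Ioo x (2*x), g u := by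
    rw [← himg,
      integral_image_eq_integral_abs_deriv_smul measurableSet_Ioo hrd hrinj g]
    simp only [abs_neg, abs_one, one_smul, hsym]
  have hIntr : IntegrableOn g (Ioo x (2*x)) := by
    have h1 := (integrableOn_image_iff_integrableOn_abs_deriv_smul
      measurableSet_Ioo hrd hrinj g)
    rw [himg] at h1
    have h2 := h1.mp hInt0
    simpa [hsym] using h2
  -- splitting
  have hsplit : (∫ u in Ioo (0:ℝ) (2*x), g u)
      = (∫ u in Ioo (0:ℝ) x, g u) + ∫ u in Ioo x (2*x), g u := by
    rw [← Ioc_union_Ioo_eq_Ioo hx.le (by linarith : x < 2*x),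
      setIntegral_union ?_ measurableSet_Ioo
        ((integrableOn_Ioc_iff_integrableOn_Ioo).mpr hInt0) hIntr,
      integral_Ioc_eq_integral_Ioo]
    rw [disjoint_left]
    rintro u ⟨_, h1⟩ ⟨h2, _⟩
    linarith
  -- substitution
  have hφd : ∀ t ∈ Ioo (0:ℝ) 1,
      HasDerivWithinAt (fun t : ℝ => x * (1 + Real.sqrt (1 - t)))
        (-(x / (2 * Real.sqrt (1 - t)))) (Ioo 0 1) t := by
    intro t ht
    have h1t : 0 < 1 - t := by linarith [ht.2]
    have h3 : HasDerivAt (fun t : ℝ => Real.sqrt (1 - t))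
        (1 / (2 * Real.sqrt (1 - t)) * (-1)) t :=
      (Real.hasDerivAt_sqrt h1t.ne').comp t ((hasDerivAt_id t).const_sub 1)
    have h4 : HasDerivAt (fun t : ℝ => x * (1 + Real.sqrt (1 - t)))
        (x * (1 / (2 * Real.sqrt (1 - t)) * (-1))) t := (h3.const_add 1).const_mul x
    rw [show -(x / (2 * Real.sqrt (1 - t))) = x * (1 / (2 * Real.sqrt (1 - t)) * (-1)) by ring]
    exact h4.hasDerivWithinAt
  have hφinj : InjOn (fun t : ℝ => x * (1 + Real.sqrt (1 - t))) (Ioo 0 1) := by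
    intro a ha b hb h
    dsimp at h
    have h' : Real.sqrt (1-a) = Real.sqrt (1-b) := by
      have := mul_left_cancel₀ hx.ne' h
      linarith
    have := (Real.sqrt_inj (by linarith [ha.2]) (by linarith [hb.2])).mp h'
    linarith
  have hφimg : (fun t : ℝ => x * (1 + Real.sqrt (1 - t))) '' Ioo 0 1 = Ioo x (2*x) := by
    ext u
    constructor
    · rintro ⟨t, ht, rfl⟩
      have h1t : 0 < 1 - t := by linarith [ht.2]
      have hs0 : 0 < Real.sqrt (1-t) := Real.sqrt_pos.mpr h1t
      have hs2 : Real.sqrt (1-t) ^ 2 = 1 - t := Real.sq_sqrt h1t.le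
      have hs1 : Real.sqrt (1-t) < 1 := by nlinarith [ht.1]
      constructor <;> dsimp <;> nlinarith
    · intro hu
      refine ⟨1 - ((u - x)/x)^2, ⟨?_, ?_⟩, ?_⟩
      · have : ((u-x)/x)^2 < 1 := by
          rw [div_pow, div_lt_one (by positivity)]
          nlinarith [hu.1, hu.2]
        linarith
      · have : 0 < ((u-x)/x)^2 := by
          have : u - x > 0 := by linarith [hu.1]
          positivity
        linarith
      · dsimp
        rw [show (1 : ℝ) - (1 - ((u-x)/x)^2) = ((u-x)/x)^2 by ring,
          Real.sqrt_sq (div_nonneg (by linarith [hu.1]) hx.le)]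
        field_simp
        ring
  have hsub : (∫ u in Ioo x (2*x), g u)
      = ∫ t in Ioo (0:ℝ) 1,
          |(-(x / (2 * Real.sqrt (1 - t))))| • g (x * (1 + Real.sqrt (1 - t))) := by
    rw [← hφimg]
    exact integral_image_eq_integral_abs_deriv_smul measurableSet_Ioo hφd hφinj g
  have hpoint : ∀ t ∈ Ioo (0:ℝ) 1,
      |(-(x / (2 * Real.sqrt (1 - t))))| • g (x * (1 + Real.sqrt (1 - t)))
        = (1/2 : ℂ) * ((x:ℂ) ^ (2*ν-1) *
            (Complex.exp (-(x:ℂ)^2 * (2 - (t:ℂ))) * (t:ℂ) ^ (ν - 1) *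
              ((1:ℂ) - (t:ℂ)) ^ (-(1:ℂ)/2))) := by
    intro t ht
    obtain ⟨ht0, ht1⟩ := ht
    have h1t : 0 < 1 - t := by linarith
    set s : ℝ := Real.sqrt (1 - t) with hs_def
    have hs0 : 0 < s := Real.sqrt_pos.mpr h1t
    have hs2 : s ^ 2 = 1 - t := Real.sq_sqrt h1t.le
    have hs1 : s < 1 := by nlinarith
    have habs : |(-(x / (2 * s)))| = x / (2*s) := by
      rw [abs_neg, abs_of_pos (by positivity)]
    have h2xφ : (2*x - x*(1+s)) = x*(1-s) := by ring
    have hp1 : (0:ℝ) ≤ x*(1+s) := by nlinarith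
    have hp2 : (0:ℝ) ≤ x*(1-s) := by nlinarith
    have hsc : ((s:ℝ):ℂ)^2 = 1 - (t:ℂ) := by exact_mod_cast congrArg Complex.ofReal hs2
    have heq1 : -((x*(1+s):ℝ):ℂ)^2/2 - ((x*(1-s):ℝ):ℂ)^2/2 = -(x:ℂ)^2*(2 - (t:ℂ)) := by
      push_cast
      linear_combination (-(x:ℂ)^2) * hsc
    have hA : ((x*(1+s):ℝ):ℂ)^(ν-1) * ((x*(1-s):ℝ):ℂ)^(ν-1)
        = (x:ℂ)^(ν-1) * (x:ℂ)^(ν-1) * (t:ℂ)^(ν-1) := by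
      rw [← Complex.mul_cpow_ofReal_nonneg hp1 hp2,
        show ((x*(1+s):ℝ):ℂ) * ((x*(1-s):ℝ):ℂ) = ((x:ℝ):ℂ) * ((x*t:ℝ):ℂ) by
          push_cast; linear_combination (-(x:ℂ)*(x:ℂ)) * hsc,
        Complex.mul_cpow_ofReal_nonneg hx.le (by positivity : (0:ℝ) ≤ x*t),
        show ((x*t:ℝ):ℂ) = ((x:ℝ):ℂ)*((t:ℝ):ℂ) by push_cast; ring,
        Complex.mul_cpow_ofReal_nonneg hx.le ht0.le, ← mul_assoc]
    have hxpow : (x:ℂ)^(2*ν-1) = (x:ℂ)^(ν-1) * (x:ℂ)^(ν-1) * (x:ℂ) := by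
      rw [show 2*ν-1 = (ν-1) + (ν-1) + 1 by ring, Complex.cpow_add _ _ hxc,
        Complex.cpow_add _ _ hxc, Complex.cpow_one]
    have hsqrt : ((1:ℂ) - (t:ℂ)) ^ (-(1:ℂ)/2) = ((s⁻¹ : ℝ) : ℂ) := by
      rw [show ((1:ℂ) - (t:ℂ)) = ((1 - t : ℝ):ℂ) by push_cast; ring,
        show (-(1:ℂ)/2) = ((-(1/2) : ℝ) : ℂ) by norm_num,
        ← Complex.ofReal_cpow h1t.le]
      norm_cast
      rw [Real.rpow_neg h1t.le, ← Real.sqrt_eq_rpow, ← hs_def]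
    rw [hg]
    simp only
    rw [h2xφ, heq1, mul_assoc (Complex.exp (-(x:ℂ)^2 * (2 - (t:ℂ)))), hA, hxpow, hsqrt, habs,
      Complex.real_smul]
    have hsne : (s:ℂ) ≠ 0 := by exact_mod_cast hs0.ne'
    push_cast
    field_simp
  rw [hsplit, hrefl, hsub, setIntegral_congr_fun measurableSet_Ioo (fun t ht => hpoint t ht),
    MeasureTheory.integral_const_mul, MeasureTheory.integral_const_mul]
  ring
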